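/- arXiv:2203.01251 — 2 statements merged into one kernel-verified Lean document; each statement's English description precedes it below -/
import Mathlib

section
/- Let ι be a finite index set, let (Ω, P) be a probability space, and let (X_i)_{i ∈ ι} and (X'_i)_{i ∈ ι} be families of α_i-valued random variables such that the combined family (X_i, X'_i)_{i ∈ ι} is mutually independent and, for each i, X'_i has the same distribution as X_i. For a subset S ⊆ ι define the resampled family X^S by (X^S)_i = X'_i if i ∈ S and (X^S)_i = X_i otherwise. Then for every measurable function f : (∏_{i ∈ ι} α_i) → Bool and every S ⊆ ι, P(f(X^S) ≠ f(X)) ≤ ∑_{i ∈ S} P(f(X^{{i}}) ≠ f(X)). -/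
open MeasureTheory

section Aux

variable {ι : Type*} [Fintype ι] [DecidableEq ι]
    {Ω : Type*} [MeasurableSpace Ω] {α : ι → Type*} [∀ i, MeasurableSpace (α i)]
    (P : Measure Ω) [IsProbabilityMeasure P]
    (X X' : ∀ i, Ω → α i)

private lemma meas_pair (hX : ∀ i, Measurable (X i)) (hX' : ∀ i, Measurable (X' i)) :
    Measurable (fun ω i => (X i ω, X' i ω)) :=
  measurable_pi_lambda _ fun i => (hX i).prodMk (hX' i)

private lemma meas_sel (T : Finset ι) :
    Measurable (fun (y : ∀ i, α i × α i) i => if i ∈ T then (y i).2 else (y i).1) := by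
  refine measurable_pi_lambda _ fun i => ?_
  by_cases h : i ∈ T
  · simpa [h] using (measurable_pi_apply i).snd
  · simpa [h] using (measurable_pi_apply i).fst

/-- Swapping `(X i, X' i)` for `i ∈ T` does not change the joint law. -/
private lemma swap_map_eq
    (hX : ∀ i, Measurable (X i)) (hX' : ∀ i, Measurable (X' i))
    (hindep : ∀ (A A' : ∀ i, Set (α i)),
      (∀ i, MeasurableSet (A i)) → (∀ i, MeasurableSet (A' i)) →
      P {ω | ∀ i, X i ω ∈ A i ∧ X' i ω ∈ A' i} =
        (∏ i, P {ω | X i ω ∈ A i}) * ∏ i, P {ω | X' i ω ∈ A' i})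
    (hident : ∀ i, ProbabilityTheory.IdentDistrib (X' i) (X i) P P)
    (T : Finset ι) :
    P.map (fun ω i => if i ∈ T then (X' i ω, X i ω) else (X i ω, X' i ω)) =
      P.map (fun ω i => (X i ω, X' i ω)) := by
  have hY : Measurable (fun ω i => (X i ω, X' i ω)) := meas_pair X X' hX hX'
  have hYT : Measurable (fun ω i => if i ∈ T then (X' i ω, X i ω) else (X i ω, X' i ω)) := by
    refine measurable_pi_lambda _ fun i => ?_
    by_cases h : i ∈ T
    · simpa [h] using (hX' i).prodMk (hX i)
    · simpa [h] using (hX i).prodMk (hX' i)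
  haveI : IsProbabilityMeasure (P.map (fun ω i => if i ∈ T then (X' i ω, X i ω)
      else (X i ω, X' i ω))) := Measure.isProbabilityMeasure_map hYT.aemeasurable
  set C : Set (Set (∀ i, α i × α i)) := Set.pi Set.univ '' Set.pi Set.univ
      (fun i => Set.image2 (· ×ˢ ·) { s : Set (α i) | MeasurableSet s }
        { t : Set (α i) | MeasurableSet t }) with hCdef
  have hgen : (by infer_instance : MeasurableSpace (∀ i, α i × α i)) = .generateFrom C :=
    (generateFrom_eq_pi (fun _ => generateFrom_prod)
      (fun _ => isCountablySpanning_measurableSet.prod isCountablySpanning_measurableSet)).symm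
  refine ext_of_generate_finite C hgen (IsPiSystem.pi fun _ => isPiSystem_prod) ?_ ?_
  · rintro _ ⟨B, hB, rfl⟩
    have hBmem : ∀ i, B i ∈ Set.image2 (· ×ˢ ·) { s : Set (α i) | MeasurableSet s }
        { t : Set (α i) | MeasurableSet t } := fun i => hB i (Set.mem_univ i)
    choose A hA A' hA' hAA' using hBmem
    have hbox : MeasurableSet (Set.pi Set.univ B) := by
      refine MeasurableSet.univ_pi fun i => ?_
      rw [← hAA' i]; exact (hA i).prod (hA' i)
    rw [Measure.map_apply hYT hbox, Measure.map_apply hY hbox]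
    have h1 : (fun ω i => if i ∈ T then (X' i ω, X i ω) else (X i ω, X' i ω)) ⁻¹'
        Set.pi Set.univ B =
        {ω | ∀ i, X i ω ∈ (if i ∈ T then A' i else A i) ∧
          X' i ω ∈ (if i ∈ T then A i else A' i)} := by
      ext ω
      simp only [Set.mem_preimage, Set.mem_univ_pi, Set.mem_setOf_eq]
      refine forall_congr' fun i => ?_
      rw [← hAA' i]
      by_cases h : i ∈ T <;> simp [h, and_comm]
    have h2 : (fun ω i => (X i ω, X' i ω)) ⁻¹' Set.pi Set.univ B =
        {ω | ∀ i, X i ω ∈ A i ∧ X' i ω ∈ A' i} := by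
      ext ω
      simp only [Set.mem_preimage, Set.mem_univ_pi, Set.mem_setOf_eq]
      refine forall_congr' fun i => ?_
      rw [← hAA' i]; simp
    rw [h1, h2]
    rw [hindep _ _ (fun i => by by_cases h : i ∈ T <;> simp only [h, if_true, if_false] <;> first | exact hA i | exact hA' i)
      (fun i => by by_cases h : i ∈ T <;> simp only [h, if_true, if_false] <;> first | exact hA i | exact hA' i),
      hindep A A' hA hA']
    have hid : ∀ (i : ι) (s : Set (α i)), MeasurableSet s →
        P {ω | X' i ω ∈ s} = P {ω | X i ω ∈ s} := fun i s hs =>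
      (hident i).measure_mem_eq hs
    rw [Finset.prod_congr rfl (fun i _ => hid i _ (by by_cases h : i ∈ T <;> simp only [h, if_true, if_false] <;> first | exact hA i | exact hA' i)),
      Finset.prod_congr rfl (fun i _ => hid i (A' i) (hA' i)),
      ← Finset.prod_mul_distrib, ← Finset.prod_mul_distrib]
    refine Finset.prod_congr rfl fun i _ => ?_
    by_cases h : i ∈ T <;> simp [h, mul_comm]
  · rw [Measure.map_apply hYT MeasurableSet.univ, Measure.map_apply hY MeasurableSet.univ,
      Set.preimage_univ, Set.preimage_univ]

private lemma swap_event_eq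
    (hX : ∀ i, Measurable (X i)) (hX' : ∀ i, Measurable (X' i))
    (hindep : ∀ (A A' : ∀ i, Set (α i)),
      (∀ i, MeasurableSet (A i)) → (∀ i, MeasurableSet (A' i)) →
      P {ω | ∀ i, X i ω ∈ A i ∧ X' i ω ∈ A' i} =
        (∏ i, P {ω | X i ω ∈ A i}) * ∏ i, P {ω | X' i ω ∈ A' i})
    (hident : ∀ i, ProbabilityTheory.IdentDistrib (X' i) (X i) P P)
    (T : Finset ι) {E : Set (∀ i, α i × α i)} (hE : MeasurableSet E) :
    P ((fun ω i => if i ∈ T then (X' i ω, X i ω) else (X i ω, X' i ω)) ⁻¹' E) =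
      P ((fun ω i => (X i ω, X' i ω)) ⁻¹' E) := by
  have hY : Measurable (fun ω i => (X i ω, X' i ω)) := meas_pair X X' hX hX'
  have hYT : Measurable (fun ω i => if i ∈ T then (X' i ω, X i ω) else (X i ω, X' i ω)) := by
    refine measurable_pi_lambda _ fun i => ?_
    by_cases h : i ∈ T
    · simpa [h] using (hX' i).prodMk (hX i)
    · simpa [h] using (hX i).prodMk (hX' i)
  rw [← Measure.map_apply hYT hE, ← Measure.map_apply hY hE,
    swap_map_eq P X X' hX hX' hindep hident T]

end Aux

/-- Let `ι` be a finite index set and `(X_i)`, `(X'_i)` families of `α i`-valued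
random variables on a probability space `(Ω, P)` such that the combined family
`(X_i, X'_i)_{i ∈ ι}` is mutually independent (the joint law of all `2|ι|` variables is the
product of their marginals, expressed here on measurable rectangles) and, for each `i`,
`X'_i` is distributed as `X_i`. For `S ⊆ ι`, the resampled family `X^S` replaces `X_i`
by `X'_i` for `i ∈ S`. Then for every measurable `f : (∏ i, α i) → Bool` and every `S`,
`P(f(X^S) ≠ f(X)) ≤ ∑_{i ∈ S} P(f(X^{{i}}) ≠ f(X))`. -/
theorem efron_stein_block_subadditivity
    {ι : Type*} [Fintype ι] [DecidableEq ι]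
    {Ω : Type*} [MeasurableSpace Ω] {α : ι → Type*} [∀ i, MeasurableSpace (α i)]
    (P : Measure Ω) [IsProbabilityMeasure P]
    (X X' : ∀ i, Ω → α i)
    (hX : ∀ i, Measurable (X i)) (hX' : ∀ i, Measurable (X' i))
    (hindep : ∀ (A A' : ∀ i, Set (α i)),
      (∀ i, MeasurableSet (A i)) → (∀ i, MeasurableSet (A' i)) →
      P {ω | ∀ i, X i ω ∈ A i ∧ X' i ω ∈ A' i} =
        (∏ i, P {ω | X i ω ∈ A i}) * ∏ i, P {ω | X' i ω ∈ A' i})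
    (hident : ∀ i, ProbabilityTheory.IdentDistrib (X' i) (X i) P P)
    (f : (∀ i, α i) → Bool) (hf : Measurable f) (S : Finset ι) :
    P {ω | f (fun i => if i ∈ S then X' i ω else X i ω) ≠ f (fun i => X i ω)} ≤
      ∑ i ∈ S,
        P {ω | f (fun j => if j = i then X' j ω else X j ω) ≠ f (fun j => X j ω)} := by
  induction S using Finset.induction_on with
  | empty => simp
  | @insert a s ha ih =>
    have hE : MeasurableSet {y : ∀ i, α i × α i |
        f (fun i => if i ∈ insert a s then (y i).2 else (y i).1) ≠
          f (fun i => if i ∈ s then (y i).2 else (y i).1)} := by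
      have h := measurableSet_eq_fun (hf.comp (meas_sel (insert a s)))
        (hf.comp (meas_sel s))
      exact h.compl
    have key : P {ω | f (fun i => if i ∈ insert a s then X' i ω else X i ω) ≠
        f (fun i => if i ∈ s then X' i ω else X i ω)} =
        P {ω | f (fun j => if j = a then X' j ω else X j ω) ≠ f (fun j => X j ω)} := by
      have h := swap_event_eq P X X' hX hX' hindep hident s hE
      have e1 : (fun ω i => (X i ω, X' i ω)) ⁻¹' {y : ∀ i, α i × α i |
          f (fun i => if i ∈ insert a s then (y i).2 else (y i).1) ≠
            f (fun i => if i ∈ s then (y i).2 else (y i).1)} =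
          {ω | f (fun i => if i ∈ insert a s then X' i ω else X i ω) ≠
            f (fun i => if i ∈ s then X' i ω else X i ω)} := rfl
      have e2 : (fun ω i => if i ∈ s then (X' i ω, X i ω) else (X i ω, X' i ω)) ⁻¹'
          {y : ∀ i, α i × α i |
            f (fun i => if i ∈ insert a s then (y i).2 else (y i).1) ≠
              f (fun i => if i ∈ s then (y i).2 else (y i).1)} =
          {ω | f (fun j => if j = a then X' j ω else X j ω) ≠ f (fun j => X j ω)} := by
        ext ω
        simp only [Set.mem_preimage, Set.mem_setOf_eq]
        have c1 : (fun i => if i ∈ insert a s then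
            (if i ∈ s then (X' i ω, X i ω) else (X i ω, X' i ω)).2 else
            (if i ∈ s then (X' i ω, X i ω) else (X i ω, X' i ω)).1) =
            fun j => if j = a then X' j ω else X j ω := by
          funext i
          by_cases h1 : i ∈ s
          · have h2 : i ≠ a := fun h => ha (h ▸ h1)
            simp [h1, h2, Finset.mem_insert]
          · by_cases h2 : i = a <;> simp [h1, h2, ha, Finset.mem_insert]
        have c2 : (fun i => if i ∈ s then
            (if i ∈ s then (X' i ω, X i ω) else (X i ω, X' i ω)).2 else
            (if i ∈ s then (X' i ω, X i ω) else (X i ω, X' i ω)).1) =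
            fun j => X j ω := by
          funext i; by_cases h1 : i ∈ s <;> simp [h1]
        rw [c1, c2]
      rw [e1, e2] at h
      exact h.symm
    have hsub : {ω | f (fun i => if i ∈ insert a s then X' i ω else X i ω) ≠
          f (fun i => X i ω)}
        ⊆ {ω | f (fun i => if i ∈ insert a s then X' i ω else X i ω) ≠
            f (fun i => if i ∈ s then X' i ω else X i ω)} ∪
          {ω | f (fun i => if i ∈ s then X' i ω else X i ω) ≠ f (fun i => X i ω)} := by
      intro ω hω
      by_contra hc
      simp only [Set.mem_union, Set.mem_setOf_eq, not_or, not_not] at hc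
      exact hω (hc.1.trans hc.2)
    calc P {ω | f (fun i => if i ∈ insert a s then X' i ω else X i ω) ≠
          f (fun i => X i ω)}
        ≤ P ({ω | f (fun i => if i ∈ insert a s then X' i ω else X i ω) ≠
            f (fun i => if i ∈ s then X' i ω else X i ω)} ∪
          {ω | f (fun i => if i ∈ s then X' i ω else X i ω) ≠ f (fun i => X i ω)}) :=
          measure_mono hsub
      _ ≤ P {ω | f (fun i => if i ∈ insert a s then X' i ω else X i ω) ≠
            f (fun i => if i ∈ s then X' i ω else X i ω)} +
          P {ω | f (fun i => if i ∈ s then X' i ω else X i ω) ≠ f (fun i => X i ω)} :=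
          measure_union_le _ _
      _ ≤ ∑ i ∈ insert a s,
          P {ω | f (fun j => if j = i then X' j ω else X j ω) ≠ f (fun j => X j ω)} := by
          rw [key, Finset.sum_insert ha]
          exact add_le_add le_rfl ih
end

section
/- Let 0 ≤ λ₀ < λ₁ and c > 0, and for each integer n ≥ 1 let f_n : ℝ → ℝ satisfy: 0 ≤ f_n(λ) ≤ 1 for all λ ∈ [λ₀, λ₁]; f_n is nondecreasing on [λ₀, λ₁]; f_{n+1}(λ) ≤ f_n(λ) for all λ ∈ [λ₀, λ₁]; f_n is differentiable on (λ₀, λ₁) with ∑_{s=1}^{n} f_s(λ) > 0 and f_n'(λ) ≥ c · (n / ∑_{s=1}^{n} f_s(λ)) · f_n(λ) · (1 − f_n(λ)) for all λ ∈ (λ₀, λ₁). Then there exist λ̃ ∈ [λ₀, λ₁] and C > 0 such that: (i) for every λ ∈ (λ₀, λ̃), limsup_{n → ∞} n^{−1} · log f_n(λ) < 0 (with the convention log 0 = −∞); and (ii) for every λ ∈ (λ̃, λ₁), inf_{n ≥ 1} f_n(λ) ≥ C · (λ − λ̃). -/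
open Filter

open Real Set in
private lemma aux_mvt_ge {g g' : ℝ → ℝ} {a b R : ℝ} (hab : a < b)
    (hcont : ContinuousOn g (Icc a b))
    (hd : ∀ y ∈ Ioo a b, HasDerivAt g (g' y) y)
    (hR : ∀ y ∈ Ioo a b, R ≤ g' y) :
    R * (b - a) ≤ g b - g a := by
  obtain ⟨ξ, hξ, he⟩ := exists_hasDerivAt_eq_slope g g' hab hcont hd
  have h1 := hR ξ hξ
  rw [he] at h1
  have hba : 0 < b - a := by linarith
  have := mul_le_mul_of_nonneg_right h1 hba.le
  rwa [div_mul_cancel₀] at this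
  exact hba.ne'

lemma aux_harmonic_le : ∀ n : ℕ, 1 ≤ n →
    ∑ s ∈ Finset.Icc 1 n, (1:ℝ)/s ≤ 1 + Real.log n := by
  intro n hn
  induction n, hn using Nat.le_induction with
  | base => simp
  | succ n hn ih =>
    rw [Finset.sum_Icc_succ_top (by omega : 1 ≤ n + 1)]
    have hn0 : (0:ℝ) < n := by exact_mod_cast hn
    have hn1 : (0:ℝ) < (n:ℝ) + 1 := by linarith
    have key : Real.log n + 1/((n:ℝ)+1) ≤ Real.log ((n:ℝ)+1) := by
      have h := Real.log_le_sub_one_of_pos (show (0:ℝ) < n/((n:ℝ)+1) by positivity)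
      rw [Real.log_div hn0.ne' hn1.ne'] at h
      have : (n:ℝ)/((n:ℝ)+1) - 1 = -(1/((n:ℝ)+1)) := by field_simp; ring
      rw [this] at h
      linarith
    push_cast
    linarith

open Real Set in
private lemma aux_summable_exp {t β : ℝ} (ht : 0 < t) (hβ : 0 < β) :
    Summable (fun n : ℕ => Real.exp (-(t * (n:ℝ) ^ β))) := by
  have hsum : Summable (fun n : ℕ => 1 / (n:ℝ)^(2:ℕ)) :=
    Real.summable_one_div_nat_pow.mpr one_lt_two
  apply hsum.of_norm_bounded_eventually_nat
  have hev : ∀ᶠ n : ℕ in atTop, (4/β) / t ≤ (n:ℝ) ^ (β/2) := by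
    have := (tendsto_rpow_atTop (by positivity : (0:ℝ) < β/2)).comp
      tendsto_natCast_atTop_atTop
    exact this.eventually_ge_atTop _
  filter_upwards [hev, eventually_ge_atTop 1] with n hn hn1
  have hn0 : (0:ℝ) < n := by exact_mod_cast hn1
  have hlog : Real.log n ≤ (2/β) * (n:ℝ)^(β/2) := by
    have h1 : Real.log ((n:ℝ)^(β/2)) ≤ (n:ℝ)^(β/2) := by
      have := Real.log_le_sub_one_of_pos (Real.rpow_pos_of_pos hn0 (β/2))
      linarith
    rw [Real.log_rpow hn0] at h1
    have hβ2 : (0:ℝ) < β/2 := by positivity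
    calc Real.log n = (2/β) * ((β/2) * Real.log n) := by field_simp
    _ ≤ (2/β) * (n:ℝ)^(β/2) := by
        apply mul_le_mul_of_nonneg_left h1 (by positivity)
  have hkey : 2 * Real.log n ≤ t * (n:ℝ)^β := by
    have h2 : (n:ℝ)^β = (n:ℝ)^(β/2) * (n:ℝ)^(β/2) := by
      rw [← Real.rpow_add hn0]; ring_nf
    have h3 : (4/β) ≤ t * (n:ℝ)^(β/2) := by
      have := mul_le_mul_of_nonneg_left hn ht.le
      rwa [mul_div_assoc', mul_comm t, mul_div_assoc, div_self ht.ne', mul_one] at this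
    have h4 : (4/β) * (n:ℝ)^(β/2) ≤ t * (n:ℝ)^(β/2) * (n:ℝ)^(β/2) :=
      mul_le_mul_of_nonneg_right h3 (Real.rpow_nonneg hn0.le _)
    have h5 : 2 * Real.log n ≤ 2 * ((2/β) * (n:ℝ)^(β/2)) := by linarith
    have h6 : 2 * (2/β * (n:ℝ)^(β/2)) = 4/β * (n:ℝ)^(β/2) := by ring
    rw [h6] at h5
    calc 2 * Real.log n ≤ (4/β) * (n:ℝ)^(β/2) := h5
    _ ≤ t * (n:ℝ)^(β/2) * (n:ℝ)^(β/2) := h4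
    _ = t * (n:ℝ)^β := by rw [h2]; ring
  rw [Real.norm_eq_abs, abs_of_pos (Real.exp_pos _)]
  have : Real.exp (-(t * (n:ℝ)^β)) ≤ Real.exp (-(2 * Real.log n)) :=
    Real.exp_le_exp.mpr (by linarith)
  refine this.trans ?_
  have he : Real.exp (-(2 * Real.log n)) = 1/(n:ℝ)^(2:ℕ) := by
    rw [Real.exp_neg, two_mul, Real.exp_add, Real.exp_log hn0, pow_two, one_div]
  rw [he]

open Real Set in
set_option maxHeartbeats 2000000 in
/-- Let `0 ≤ λ₀ < λ₁` and `c > 0`, and for each `n ≥ 1` let `f n : ℝ → ℝ`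
take values in `[0,1]` on `[λ₀, λ₁]`, be nondecreasing on `[λ₀, λ₁]`, be nonincreasing in
`n` on `[λ₀, λ₁]`, and be differentiable on `(λ₀, λ₁)` with `∑_{s=1}^n f s > 0` and
`(f n)' ≥ c · (n / ∑_{s=1}^n f s) · f n · (1 − f n)` there. Then there exist
`λ̃ ∈ [λ₀, λ₁]` and `C > 0` such that
(i) for every `λ ∈ (λ₀, λ̃)`, `limsup_{n→∞} n⁻¹ log f n λ < 0` (in `EReal`, with the
convention `log 0 = −∞`), and
(ii) for every `λ ∈ (λ̃, λ₁)`, `inf_{n ≥ 1} f n λ ≥ C (λ − λ̃)`. -/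
theorem sharp_threshold_from_differential_inequality
    (lam₀ lam₁ c : ℝ) (h₀ : 0 ≤ lam₀) (h₀₁ : lam₀ < lam₁) (hc : 0 < c)
    (f : ℕ → ℝ → ℝ)
    (hbound : ∀ n ≥ 1, ∀ x ∈ Set.Icc lam₀ lam₁, 0 ≤ f n x ∧ f n x ≤ 1)
    (hmono : ∀ n ≥ 1, MonotoneOn (f n) (Set.Icc lam₀ lam₁))
    (hdecr : ∀ n ≥ 1, ∀ x ∈ Set.Icc lam₀ lam₁, f (n + 1) x ≤ f n x)
    (hderiv : ∀ n ≥ 1, ∀ x ∈ Set.Ioo lam₀ lam₁,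
      0 < ∑ s ∈ Finset.Icc 1 n, f s x ∧
      DifferentiableAt ℝ (f n) x ∧
      c * ((n : ℝ) / ∑ s ∈ Finset.Icc 1 n, f s x) * f n x * (1 - f n x) ≤
        deriv (f n) x) :
    ∃ lam ∈ Set.Icc lam₀ lam₁, ∃ C > 0,
      (∀ x ∈ Set.Ioo lam₀ lam,
        Filter.atTop.limsup (fun n : ℕ =>
          (((n : ℝ)⁻¹ : ℝ) : EReal) *
            (if f n x = 0 then (⊥ : EReal) else ((Real.log (f n x) : ℝ) : EReal)))
          < (0 : EReal)) ∧
      (∀ x ∈ Set.Ioo lam lam₁, ∀ n ≥ 1, C * (x - lam) ≤ f n x) := by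
  -- monotonicity in n
  have hfle : ∀ n, 1 ≤ n → ∀ m, n ≤ m → ∀ x ∈ Set.Icc lam₀ lam₁, f m x ≤ f n x := by
    intro n hn m hm
    induction m, hm using Nat.le_induction with
    | base => intro x _; exact le_refl _
    | succ m hm ih =>
      intro x hx
      exact (hdecr m (le_trans hn hm) x hx).trans (ih x hx)
  -- basic sum facts
  have hSg_nonneg : ∀ n, ∀ x ∈ Set.Icc lam₀ lam₁, 0 ≤ ∑ s ∈ Finset.Icc 1 n, f s x := by
    intro n x hx
    apply Finset.sum_nonneg
    intro s hs
    exact (hbound s (Finset.mem_Icc.mp hs).1 x hx).1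
  have hSg_mono_x : ∀ n, ∀ x ∈ Set.Icc lam₀ lam₁, ∀ y ∈ Set.Icc lam₀ lam₁, x ≤ y →
      ∑ s ∈ Finset.Icc 1 n, f s x ≤ ∑ s ∈ Finset.Icc 1 n, f s y := by
    intro n x hx y hy hxy
    apply Finset.sum_le_sum
    intro s hs
    exact hmono s (Finset.mem_Icc.mp hs).1 hx hy hxy
  have hSg_le : ∀ n, ∀ x ∈ Set.Icc lam₀ lam₁, ∑ s ∈ Finset.Icc 1 n, f s x ≤ (n:ℝ) := by
    intro n x hx
    calc ∑ s ∈ Finset.Icc 1 n, f s x ≤ ∑ s ∈ Finset.Icc 1 n, (1:ℝ) :=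
      Finset.sum_le_sum (fun s hs => (hbound s (Finset.mem_Icc.mp hs).1 x hx).2)
    _ = (n:ℝ) := by simp
  have hfn_le_Sg : ∀ n : ℕ, 1 ≤ n → ∀ x ∈ Set.Icc lam₀ lam₁,
      (n:ℝ) * f n x ≤ ∑ s ∈ Finset.Icc 1 n, f s x := by
    intro n hn x hx
    calc (n:ℝ) * f n x = ∑ s ∈ Finset.Icc 1 n, f n x := by
          rw [Finset.sum_const, Nat.card_Icc]; simp [nsmul_eq_mul]
    _ ≤ ∑ s ∈ Finset.Icc 1 n, f s x := by
        apply Finset.sum_le_sum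
        intro s hs
        obtain ⟨hs1, hs2⟩ := Finset.mem_Icc.mp hs
        exact hfle s hs1 n hs2 x hx
  have hstep1 : ∀ s:ℕ, 1 ≤ s → ∀ y ∈ Set.Ioo lam₀ lam₁,
      Real.log (∑ u ∈ Finset.Icc 1 (s+1), f u y) - Real.log (∑ u ∈ Finset.Icc 1 s, f u y)
        ≤ f s y / ∑ u ∈ Finset.Icc 1 s, f u y := by
    intro s hs y hy
    have hyIcc : y ∈ Set.Icc lam₀ lam₁ := Set.Ioo_subset_Icc_self hy
    have hA : 0 < ∑ u ∈ Finset.Icc 1 s, f u y := (hderiv s hs y hy).1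
    have hB : 0 < ∑ u ∈ Finset.Icc 1 (s+1), f u y := (hderiv (s+1) (by omega) y hy).1
    have hsplit : ∑ u ∈ Finset.Icc 1 (s+1), f u y
        = (∑ u ∈ Finset.Icc 1 s, f u y) + f (s+1) y :=
      Finset.sum_Icc_succ_top (by omega) _
    have hle := hdecr s hs y hyIcc
    have h := Real.log_le_sub_one_of_pos (div_pos hB hA)
    rw [Real.log_div hB.ne' hA.ne'] at h
    have heq : (∑ u ∈ Finset.Icc 1 (s+1), f u y)/(∑ u ∈ Finset.Icc 1 s, f u y) - 1
        = f (s+1) y / ∑ u ∈ Finset.Icc 1 s, f u y := by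
      rw [hsplit]; field_simp; ring
    rw [heq] at h
    have h2 : f (s+1) y / (∑ u ∈ Finset.Icc 1 s, f u y)
        ≤ f s y / (∑ u ∈ Finset.Icc 1 s, f u y) :=
      div_le_div_of_nonneg_right hle hA.le
    linarith
  have telescope : ∀ N:ℕ, 1 ≤ N → ∀ k:ℕ, N ≤ k → ∀ y ∈ Set.Ioo lam₀ lam₁,
      Real.log (∑ u ∈ Finset.Icc 1 k, f u y) - Real.log (∑ u ∈ Finset.Icc 1 N, f u y)
        ≤ ∑ s ∈ Finset.Icc N k, f s y / ∑ u ∈ Finset.Icc 1 s, f u y := by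
    intro N hN k hk
    have main : ∀ k:ℕ, N ≤ k → ∀ y ∈ Set.Ioo lam₀ lam₁,
        Real.log (∑ u ∈ Finset.Icc 1 (k+1), f u y) - Real.log (∑ u ∈ Finset.Icc 1 N, f u y)
          ≤ ∑ s ∈ Finset.Icc N k, f s y / ∑ u ∈ Finset.Icc 1 s, f u y := by
      intro k hk
      induction k, hk using Nat.le_induction with
      | base =>
        intro y hy
        rw [Finset.Icc_self, Finset.sum_singleton]
        exact hstep1 N hN y hy
      | succ k hk ih =>
        intro y hy
        rw [Finset.sum_Icc_succ_top (by omega : N ≤ k+1)]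
        have h1 := hstep1 (k+1) (by omega) y hy
        have h2 := ih y hy
        linarith
    intro y hy
    have h3 := main k hk y hy
    have hmonoS : (∑ u ∈ Finset.Icc 1 k, f u y) ≤ ∑ u ∈ Finset.Icc 1 (k+1), f u y := by
      rw [Finset.sum_Icc_succ_top (by omega : 1 ≤ k+1)]
      have := (hbound (k+1) (by omega) y (Set.Ioo_subset_Icc_self hy)).1
      linarith
    have hpos : 0 < ∑ u ∈ Finset.Icc 1 k, f u y := (hderiv k (by omega) y hy).1
    have := Real.log_le_log hpos hmonoS
    linarith
  -- one-step exponential decay via MVT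
  have step : ∀ a b : ℝ, lam₀ < a → a < b → b < lam₁ →
      ∀ n, 1 ≤ n → ∀ K : ℝ, 0 < K →
      (∀ y ∈ Set.Icc a b, ∑ s ∈ Finset.Icc 1 n, f s y ≤ K) → f n b ≤ 1/2 →
      f n a ≤ Real.exp (-(c/2 * ((n:ℝ)/K) * (b - a))) := by
    intro a b ha hab hb n hn K hK hSgK hfb
    have hsub : Set.Icc a b ⊆ Set.Ioo lam₀ lam₁ := fun y hy =>
      ⟨lt_of_lt_of_le ha hy.1, lt_of_le_of_lt hy.2 hb⟩
    have hsub' : Set.Icc a b ⊆ Set.Icc lam₀ lam₁ :=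
      hsub.trans Set.Ioo_subset_Icc_self
    have haI : a ∈ Set.Icc a b := ⟨le_refl a, hab.le⟩
    have hbI : b ∈ Set.Icc a b := ⟨hab.le, le_refl b⟩
    rcases eq_or_lt_of_le (hbound n hn a (hsub' haI)).1 with h0 | hpos
    · rw [← h0]; exact (Real.exp_pos _).le
    have hfpos : ∀ y ∈ Set.Icc a b, 0 < f n y := fun y hy =>
      lt_of_lt_of_le hpos (hmono n hn (hsub' haI) (hsub' hy) hy.1)
    set g : ℝ → ℝ := fun y => Real.log (f n y) with hgdef
    have hd : ∀ y ∈ Set.Ioo a b, HasDerivAt g (deriv (f n) y / f n y) y := by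
      intro y hy
      have hy' : y ∈ Set.Icc a b := Set.Ioo_subset_Icc_self hy
      have hdiff := (hderiv n hn y (hsub hy')).2.1
      exact hdiff.hasDerivAt.log (hfpos y hy').ne'
    have hcont : ContinuousOn g (Set.Icc a b) := by
      apply ContinuousOn.log
      · intro y hy
        exact ((hderiv n hn y (hsub hy)).2.1.continuousAt).continuousWithinAt
      · intro y hy
        exact (hfpos y hy).ne'
    have hR : ∀ y ∈ Set.Ioo a b, c/2 * ((n:ℝ)/K) ≤ deriv (f n) y / f n y := by
      intro y hy
      have hy' : y ∈ Set.Icc a b := Set.Ioo_subset_Icc_self hy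
      obtain ⟨hposS, hdiff, hineq⟩ := hderiv n hn y (hsub hy')
      have hfy : 0 < f n y := hfpos y hy'
      have hfyb : f n y ≤ f n b := hmono n hn (hsub' hy') (hsub' hbI) hy'.2
      have hfyh : f n y ≤ 1/2 := hfyb.trans hfb
      have hSK : ∑ s ∈ Finset.Icc 1 n, f s y ≤ K := hSgK y hy'
      have hnK : (n:ℝ)/K ≤ (n:ℝ)/(∑ s ∈ Finset.Icc 1 n, f s y) :=
        div_le_div_of_nonneg_left (Nat.cast_nonneg n) hposS hSK
      rw [le_div_iff₀ hfy]
      calc c/2 * ((n:ℝ)/K) * f n y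
          = c * ((n:ℝ)/K) * f n y * (1/2) := by ring
        _ ≤ c * ((n:ℝ)/(∑ s ∈ Finset.Icc 1 n, f s y)) * f n y * (1 - f n y) := by
            apply mul_le_mul
            · apply mul_le_mul
              · exact mul_le_mul_of_nonneg_left hnK hc.le
              · exact le_refl _
              · exact hfy.le
              · positivity
            · linarith
            · norm_num
            · positivity
        _ ≤ deriv (f n) y := hineq
    have hmvt := aux_mvt_ge hab hcont hd hR
    have hgb : g b ≤ 0 := Real.log_nonpos (hfpos b hbI).le (hbound n hn b (hsub' hbI)).2
    have hga : Real.log (f n a) ≤ -(c/2 * ((n:ℝ)/K) * (b - a)) := by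
      simp only [hgdef] at hmvt hgb
      linarith
    calc f n a = Real.exp (Real.log (f n a)) := (Real.exp_log hpos).symm
    _ ≤ _ := Real.exp_le_exp.mpr hga
  -- the threshold
  set S : Set ℝ := {y ∈ Set.Icc lam₀ lam₁ |
    ∀ ε > (0:ℝ), ∃ᶠ n : ℕ in atTop, ((n:ℝ))^((1:ℝ)-ε) ≤ ∑ s ∈ Finset.Icc 1 n, f s y} with hSdef
  have hbdd : BddBelow (insert lam₁ S) := by
    refine ⟨lam₀, ?_⟩
    rintro y (rfl | hy)
    · exact h₀₁.le
    · exact hy.1.1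
  set lam : ℝ := sInf (insert lam₁ S) with hlamdef
  have hlam_le : lam ≤ lam₁ := csInf_le hbdd (mem_insert _ _)
  have hlam_ge : lam₀ ≤ lam := by
    apply le_csInf ⟨lam₁, mem_insert _ _⟩
    rintro y (rfl | hy)
    · exact h₀₁.le
    · exact hy.1.1
  refine ⟨lam, ⟨hlam_ge, hlam_le⟩, min (c/2) (1/(2*(lam₁ - lam₀))), ?_, ?_, ?_⟩
  · have : 0 < lam₁ - lam₀ := by linarith
    positivity
  · -- part (i)
    intro x hx
    obtain ⟨hx0, hxlam⟩ := hx
    have hxlam₁ : x < lam₁ := lt_of_lt_of_le hxlam hlam_le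
    have hxIcc : x ∈ Set.Icc lam₀ lam₁ := ⟨hx0.le, hxlam₁.le⟩
    set l' : ℝ := (x + lam)/2 with hl'def
    have hxl' : x < l' := by rw [hl'def]; linarith
    have hl'lam : l' < lam := by rw [hl'def]; linarith
    have hl'Icc : l' ∈ Set.Icc lam₀ lam₁ :=
      ⟨le_of_lt (lt_trans hx0 hxl'), le_of_lt (lt_of_lt_of_le hl'lam hlam_le)⟩
    have hl'notS : l' ∉ S := by
      intro hmem
      have h1 := csInf_le hbdd (Set.mem_insert_of_mem _ hmem)
      rw [← hlamdef] at h1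
      exact absurd h1 (not_le.mpr hl'lam)
    have hnot : ¬ ∀ ε > (0:ℝ), ∃ᶠ n : ℕ in atTop,
        ((n:ℝ))^((1:ℝ)-ε) ≤ ∑ s ∈ Finset.Icc 1 n, f s l' := by
      intro h
      exact hl'notS ⟨hl'Icc, h⟩
    push_neg at hnot
    obtain ⟨ε, hε, hfr⟩ := hnot
    set a : ℝ := x + (l' - x)/3 with hadef
    set b : ℝ := x + 2*(l' - x)/3 with hbdef
    have hxa : x < a := by rw [hadef]; linarith
    have hab2 : a < b := by rw [hadef, hbdef]; linarith
    have hbl' : b < l' := by rw [hbdef]; linarith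
    have hblam₁ : b < lam₁ := by linarith [hl'Icc.2]
    have halam₁ : a < lam₁ := by linarith
    have haIcc : a ∈ Set.Icc lam₀ lam₁ := ⟨by linarith [hxIcc.1], halam₁.le⟩
    have hev2 : ∀ᶠ (n:ℕ) in atTop, (2:ℝ) ≤ (n:ℝ)^ε := by
      have h := (tendsto_rpow_atTop hε).comp (tendsto_natCast_atTop_atTop (R := ℝ))
      exact h.eventually_ge_atTop 2
    obtain ⟨N₂, hN₂⟩ := Filter.eventually_atTop.mp
      ((hfr.and hev2).and (eventually_ge_atTop 1))
    set c₁ : ℝ := c/2 * ((l' - x)/3) with hc₁def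
    have hc₁ : 0 < c₁ := by
      rw [hc₁def]
      have : 0 < l' - x := by linarith
      positivity
    have hstepA : ∀ n:ℕ, N₂ ≤ n → f n a ≤ Real.exp (-(c₁ * (n:ℝ)^ε)) := by
      intro n hn
      obtain ⟨⟨hSl', h2n⟩, h1n⟩ := hN₂ n hn
      have hn0 : (0:ℝ) < n := by exact_mod_cast h1n
      have hKpos : (0:ℝ) < (n:ℝ)^((1:ℝ)-ε) := Real.rpow_pos_of_pos hn0 _
      have hKb : ∀ y ∈ Set.Icc a b, ∑ s ∈ Finset.Icc 1 n, f s y ≤ (n:ℝ)^((1:ℝ)-ε) := by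
        intro y hy
        have hyIcc : y ∈ Set.Icc lam₀ lam₁ :=
          ⟨by linarith [hy.1, hxIcc.1], by linarith [hy.2]⟩
        have h5 := hSg_mono_x n y hyIcc l' hl'Icc (le_trans hy.2 hbl'.le)
        linarith
      have hfb : f n b ≤ 1/2 := by
        have hbIcc : b ∈ Set.Icc lam₀ lam₁ := ⟨by linarith [hxIcc.1], hblam₁.le⟩
        have h1 := hfn_le_Sg n h1n b hbIcc
        have h2 : ∑ s ∈ Finset.Icc 1 n, f s b ≤ (n:ℝ)^((1:ℝ)-ε) :=
          hKb b ⟨hab2.le, le_refl b⟩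
        have hεpos : (0:ℝ) < (n:ℝ)^ε := Real.rpow_pos_of_pos hn0 ε
        have h3 : (n:ℝ)^((1:ℝ)-ε) = (n:ℝ)/(n:ℝ)^ε := by
          rw [Real.rpow_sub hn0, Real.rpow_one]
        have h4 : f n b ≤ 1/(n:ℝ)^ε := by
          rw [h3] at h2
          rw [le_div_iff₀ hεpos]
          have h6 : (n:ℝ) * ((f n b) * (n:ℝ)^ε) ≤ (n:ℝ) * 1 := by
            calc (n:ℝ) * ((f n b) * (n:ℝ)^ε) = ((n:ℝ) * f n b) * (n:ℝ)^ε := by ring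
            _ ≤ ((n:ℝ)/(n:ℝ)^ε) * (n:ℝ)^ε := by
                apply mul_le_mul_of_nonneg_right (h1.trans h2) hεpos.le
            _ = (n:ℝ) := by field_simp
            _ = (n:ℝ) * 1 := by ring
          have := le_of_mul_le_mul_left h6 hn0
          linarith
        have h5 : 1/(n:ℝ)^ε ≤ 1/2 := by
          apply one_div_le_one_div_of_le two_pos h2n
        linarith
      have hres := step a b (by linarith [hxIcc.1, hx0]) hab2 hblam₁ n h1n
        ((n:ℝ)^((1:ℝ)-ε)) hKpos hKb hfb
      have heq : -(c/2 * ((n:ℝ)/(n:ℝ)^((1:ℝ)-ε)) * (b - a)) = -(c₁ * (n:ℝ)^ε) := by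
        have h3 : (n:ℝ)/(n:ℝ)^((1:ℝ)-ε) = (n:ℝ)^ε := by
          rw [Real.rpow_sub hn0, Real.rpow_one]
          have hεpos : (0:ℝ) < (n:ℝ)^ε := Real.rpow_pos_of_pos hn0 ε
          field_simp
        rw [h3, hbdef, hadef, hc₁def]; ring
      rw [heq] at hres
      exact hres
    have hsummable := aux_summable_exp hc₁ hε
    set B : ℝ := (N₂:ℝ) + 1 + ∑' s:ℕ, Real.exp (-(c₁ * (s:ℝ)^ε)) with hBdef
    have htsum_nonneg : 0 ≤ ∑' s:ℕ, Real.exp (-(c₁ * (s:ℝ)^ε)) :=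
      tsum_nonneg (fun s => (Real.exp_pos _).le)
    have hBpos : 0 < B := by
      rw [hBdef]
      have : (0:ℝ) ≤ N₂ := Nat.cast_nonneg _
      linarith
    have hSa : ∀ n:ℕ, ∑ s ∈ Finset.Icc 1 n, f s a ≤ B := by
      intro n
      rcases le_or_gt n N₂ with h | h
      · have h1 := hSg_le n a haIcc
        have h2 : (n:ℝ) ≤ N₂ := Nat.cast_le.mpr h
        rw [hBdef]; linarith
      · have hIoc : ∀ m : ℕ, Finset.Icc 1 m = Finset.Ioc 0 m := by
          intro m; rw [← Finset.Icc_add_one_left_eq_Ioc, zero_add]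
        have hsplit : ∑ s ∈ Finset.Icc 1 n, f s a
            = ∑ s ∈ Finset.Icc 1 N₂, f s a + ∑ s ∈ Finset.Ioc N₂ n, f s a := by
          rw [hIoc n, hIoc N₂]
          exact (Finset.sum_Ioc_consecutive _ (Nat.zero_le N₂) h.le).symm
        rw [hsplit]
        have hb1 : ∑ s ∈ Finset.Icc 1 N₂, f s a ≤ (N₂:ℝ) := hSg_le N₂ a haIcc
        have hb2 : ∑ s ∈ Finset.Ioc N₂ n, f s a
            ≤ ∑ s ∈ Finset.Ioc N₂ n, Real.exp (-(c₁ * (s:ℝ)^ε)) := by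
          apply Finset.sum_le_sum
          intro s hs
          exact hstepA s (Finset.mem_Ioc.mp hs).1.le
        have hb3 : ∑ s ∈ Finset.Ioc N₂ n, Real.exp (-(c₁ * (s:ℝ)^ε))
            ≤ ∑' s:ℕ, Real.exp (-(c₁ * (s:ℝ)^ε)) :=
          Summable.sum_le_tsum _ (fun i _ => (Real.exp_pos _).le) hsummable
        rw [hBdef]; linarith
    have hev3 : ∀ᶠ (n:ℕ) in atTop, Real.exp (-(c₁ * (n:ℝ)^ε)) ≤ 1/2 := by
      have h := (tendsto_rpow_atTop hε).comp (tendsto_natCast_atTop_atTop (R := ℝ))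
      filter_upwards [h.eventually_ge_atTop ((Real.log 2)/c₁)] with n hn
      have h1 : Real.log 2 ≤ c₁ * (n:ℝ)^ε := by
        rw [div_le_iff₀ hc₁] at hn
        calc Real.log 2 ≤ (n:ℝ)^ε * c₁ := hn
        _ = c₁ * (n:ℝ)^ε := by ring
      calc Real.exp (-(c₁ * (n:ℝ)^ε)) ≤ Real.exp (-(Real.log 2)) :=
            Real.exp_le_exp.mpr (by linarith)
      _ = 1/2 := by rw [Real.exp_neg, Real.exp_log two_pos, one_div]
    obtain ⟨N₃, hN₃⟩ := Filter.eventually_atTop.mp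
      (hev3.and (eventually_ge_atTop (max N₂ 1)))
    set c₂ : ℝ := c/2 * ((a - x)/B) with hc₂def
    have hc₂ : 0 < c₂ := by
      rw [hc₂def]
      exact mul_pos (by linarith) (div_pos (by linarith) hBpos)
    have hstepB : ∀ n:ℕ, N₃ ≤ n → f n x ≤ Real.exp (-(c₂ * n)) := by
      intro n hn
      obtain ⟨hhalf, hmax⟩ := hN₃ n hn
      have h1n : 1 ≤ n := le_trans (le_max_right _ _) hmax
      have hN₂n : N₂ ≤ n := le_trans (le_max_left _ _) hmax
      have hfa : f n a ≤ 1/2 := (hstepA n hN₂n).trans hhalf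
      have hKb : ∀ y ∈ Set.Icc x a, ∑ s ∈ Finset.Icc 1 n, f s y ≤ B := by
        intro y hy
        have hyIcc : y ∈ Set.Icc lam₀ lam₁ := ⟨by linarith [hy.1, hxIcc.1], by linarith [hy.2]⟩
        exact le_trans (hSg_mono_x n y hyIcc a haIcc hy.2) (hSa n)
      have hres := step x a hx0 hxa halam₁ n h1n B hBpos hKb hfa
      have heq : -(c/2 * ((n:ℝ)/B) * (a - x)) = -(c₂ * n) := by
        rw [hc₂def]; field_simp
      rw [heq] at hres
      exact hres
    have hub : ∀ᶠ (n:ℕ) in atTop, (((n : ℝ)⁻¹ : ℝ) : EReal) *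
        (if f n x = 0 then (⊥ : EReal) else ((Real.log (f n x) : ℝ) : EReal))
        ≤ ((-c₂ : ℝ) : EReal) := by
      filter_upwards [eventually_ge_atTop (max N₃ 1)] with n hn
      have h1n : 1 ≤ n := le_trans (le_max_right _ _) hn
      have hn3 : N₃ ≤ n := le_trans (le_max_left _ _) hn
      have hn0 : (0:ℝ) < n := by exact_mod_cast h1n
      have hinv : (0:ℝ) < (n:ℝ)⁻¹ := by positivity
      by_cases h0 : f n x = 0
      · rw [if_pos h0]
        rw [EReal.mul_bot_of_pos (by exact_mod_cast hinv)]
        exact bot_le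
      · rw [if_neg h0]
        have hpos : 0 < f n x := lt_of_le_of_ne (hbound n h1n x hxIcc).1 (Ne.symm h0)
        have hlog : Real.log (f n x) ≤ -(c₂ * n) := by
          calc Real.log (f n x) ≤ Real.log (Real.exp (-(c₂ * n))) :=
                Real.log_le_log hpos (hstepB n hn3)
          _ = -(c₂ * n) := Real.log_exp _
        have hfin : (n:ℝ)⁻¹ * Real.log (f n x) ≤ -c₂ := by
          have h2 := mul_le_mul_of_nonneg_left hlog hinv.le
          have h3 : (n:ℝ)⁻¹ * -(c₂ * n) = -c₂ := by field_simp
          linarith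
        rw [← EReal.coe_mul]
        exact_mod_cast hfin
    have hl1 : Filter.atTop.limsup (fun n : ℕ =>
        (((n : ℝ)⁻¹ : ℝ) : EReal) *
          (if f n x = 0 then (⊥ : EReal) else ((Real.log (f n x) : ℝ) : EReal)))
        ≤ ((-c₂ : ℝ) : EReal) := Filter.limsup_le_of_le (by isBoundedDefault) hub
    have hl2 : ((-c₂ : ℝ) : EReal) < (0:EReal) := by
      rw [show (0:EReal) = ((0:ℝ):EReal) from rfl]
      exact_mod_cast (by linarith : -c₂ < (0:ℝ))
    exact lt_of_le_of_lt hl1 hl2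
  · -- part (ii)
    intro x hx n hn
    obtain ⟨hlamx, hxlam₁⟩ := hx
    have hxIcc : x ∈ Set.Icc lam₀ lam₁ := ⟨le_trans hlam_ge hlamx.le, hxlam₁.le⟩
    have hd10 : 0 < lam₁ - lam₀ := by linarith
    set C : ℝ := min (c/2) (1/(2*(lam₁ - lam₀))) with hCdef
    have hC2 : C ≤ c/2 := min_le_left _ _
    have hC3 : C ≤ 1/(2*(lam₁ - lam₀)) := min_le_right _ _
    have hCpos : 0 < C := lt_min (by linarith) (by positivity)
    by_cases hA : ∃ N, 1 ≤ N ∧ f N x < 1/2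
    case neg =>
      push_neg at hA
      have h1 : C * (x - lam) ≤ 1/2 := by
        have hxl : x - lam ≤ lam₁ - lam₀ := by linarith [hxIcc.2, hlam_ge]
        have h0 : 0 ≤ x - lam := by linarith
        calc C * (x - lam) ≤ (1/(2*(lam₁ - lam₀))) * (lam₁ - lam₀) :=
              mul_le_mul hC3 hxl h0 (by positivity)
        _ = 1/2 := by field_simp
      exact h1.trans (hA n hn)
    case pos =>
    obtain ⟨N, hN1, hNhalf⟩ := hA
    have hsmall : ∀ s:ℕ, N ≤ s → ∀ y ∈ Set.Icc lam₀ lam₁, y ≤ x → f s y ≤ 1/2 := by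
      intro s hs y hy hyx
      have h1 : f s y ≤ f s x := hmono s (le_trans hN1 hs) hy hxIcc hyx
      have h2 : f s x ≤ f N x := hfle N hN1 s hs x hxIcc
      linarith
    have key : ∀ l', l' ∈ S → l' < x → ∀ δ, 0 < δ → c/2 * (x - l') ≤ f n x + δ := by
      intro l' hl'S hl'x δ hδ
      obtain ⟨hl'Icc, hl'freq⟩ := hl'S
      set a : ℝ := min ((l' + x)/2) (l' + δ/c) with hadef
      have hδc : 0 < δ/c := div_pos hδ hc
      have hl'a : l' < a := lt_min (by linarith) (by linarith)
      have hax : a < x := lt_of_le_of_lt (min_le_left _ _) (by linarith)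
      have haIoo : a ∈ Set.Ioo lam₀ lam₁ :=
        ⟨lt_of_le_of_lt hl'Icc.1 hl'a, by linarith⟩
      have haIcc : a ∈ Set.Icc lam₀ lam₁ := Set.Ioo_subset_Icc_self haIoo
      have hal' : c/2 * (a - l') ≤ δ/2 := by
        have h2 : a - l' ≤ δ/c := by
          have := min_le_right ((l' + x)/2) (l' + δ/c)
          linarith [hadef ▸ this]
        calc c/2 * (a - l') ≤ c/2 * (δ/c) := by
              apply mul_le_mul_of_nonneg_left h2 (by linarith)
        _ = δ/2 := by field_simp
      suffices key2 : c/2 * (x - a) ≤ f n x + δ/2 by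
        have expand : c/2*(x - l') = c/2*(x - a) + c/2*(a - l') := by ring
        linarith
      set A : ℝ := c/2 * (x - a) with hAdef
      have hApos : 0 < A := by
        rw [hAdef]
        have : 0 < x - a := by linarith
        positivity
      by_contra hcon
      push_neg at hcon
      set σ : ℝ := δ/2 with hσdef
      have hσpos : 0 < σ := by rw [hσdef]; linarith
      set ε : ℝ := σ/(2*A) with hεdef
      have hεpos : 0 < ε := by rw [hεdef]; positivity
      have hAε : A * ε = σ/2 := by
        rw [hεdef]; field_simp
      set M : ℕ := max N n with hMdef
      have hM1 : 1 ≤ M := le_trans hN1 (le_max_left _ _)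
      have hMN : N ≤ M := le_max_left _ _
      have hMn : n ≤ M := le_max_right _ _
      have hM0 : (1:ℝ) ≤ (M:ℝ) := by exact_mod_cast hM1
      set Hn : ℝ := ∑ s ∈ Finset.Icc 1 n, (1:ℝ)/s with hHdef
      have hHnonneg : 0 ≤ Hn := Finset.sum_nonneg (fun s _ => by positivity)
      have hlogM : 0 ≤ Real.log (M:ℝ) := Real.log_nonneg hM0
      have hMain : ∀ k:ℕ, M ≤ k → ((k:ℝ))^((1:ℝ)-ε) ≤ ∑ s ∈ Finset.Icc 1 k, f s l' →
          A * ((1-ε) * Real.log k - Real.log (M:ℝ)) ≤ Hn + f n x * (1 + Real.log k) := by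
        intro k hMk hfreqk
        have h1k : 1 ≤ k := le_trans hM1 hMk
        have hk0 : (0:ℝ) < k := by exact_mod_cast h1k
        set G : ℝ → ℝ := fun y => ∑ s ∈ Finset.Icc 1 k, f s y / (s:ℝ) with hGdef
        have hGd : ∀ y ∈ Set.Ioo lam₀ lam₁,
            HasDerivAt G (∑ s ∈ Finset.Icc 1 k, deriv (f s) y / (s:ℝ)) y := by
          intro y hy
          apply HasDerivAt.fun_sum
          intro s hs
          have hs1 : 1 ≤ s := (Finset.mem_Icc.mp hs).1
          exact ((hderiv s hs1 y hy).2.1.hasDerivAt).div_const _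
        have hsubIoo : Set.Icc a x ⊆ Set.Ioo lam₀ lam₁ := fun y hy =>
          ⟨lt_of_lt_of_le haIoo.1 hy.1, lt_of_le_of_lt hy.2 hxlam₁⟩
        have hGcont : ContinuousOn G (Set.Icc a x) := fun y hy =>
          ((hGd y (hsubIoo hy)).differentiableAt.continuousAt).continuousWithinAt
        have hSka0 : 0 < ∑ s ∈ Finset.Icc 1 k, f s a := (hderiv k h1k a haIoo).1
        have hRbd : ∀ y ∈ Set.Ioo a x,
            (c/2) * (Real.log (∑ s ∈ Finset.Icc 1 k, f s a) - Real.log (M:ℝ)) ≤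
              ∑ s ∈ Finset.Icc 1 k, deriv (f s) y / (s:ℝ) := by
          intro y hy
          have hyIoo : y ∈ Set.Ioo lam₀ lam₁ := hsubIoo (Set.Ioo_subset_Icc_self hy)
          have hyIcc : y ∈ Set.Icc lam₀ lam₁ := Set.Ioo_subset_Icc_self hyIoo
          have hterm_nonneg : ∀ s ∈ Finset.Icc 1 k, 0 ≤ deriv (f s) y / (s:ℝ) := by
            intro s hs
            have hs1 := (Finset.mem_Icc.mp hs).1
            obtain ⟨hpos, hdiff, hineq⟩ := hderiv s hs1 y hyIoo
            have hf0 := (hbound s hs1 y hyIcc).1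
            have hf1 := (hbound s hs1 y hyIcc).2
            have hd0 : 0 ≤ deriv (f s) y := by
              have h9 := mul_nonneg (mul_nonneg (mul_nonneg hc.le
                (div_nonneg (Nat.cast_nonneg s) hpos.le)) hf0)
                (by linarith : (0:ℝ) ≤ 1 - f s y)
              linarith [hineq]
            positivity
          have hsubset : Finset.Icc M k ⊆ Finset.Icc 1 k :=
            Finset.Icc_subset_Icc hM1 (le_refl k)
          have h1 : ∑ s ∈ Finset.Icc M k, deriv (f s) y / (s:ℝ) ≤
              ∑ s ∈ Finset.Icc 1 k, deriv (f s) y / (s:ℝ) :=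
            Finset.sum_le_sum_of_subset_of_nonneg hsubset
              (fun i hi _ => hterm_nonneg i hi)
          have h2 : ∀ s ∈ Finset.Icc M k,
              (c/2) * (f s y / ∑ u ∈ Finset.Icc 1 s, f u y) ≤ deriv (f s) y / (s:ℝ) := by
            intro s hs
            obtain ⟨hsM, hsk⟩ := Finset.mem_Icc.mp hs
            have hs1 : 1 ≤ s := le_trans hM1 hsM
            obtain ⟨hpos, hdiff, hineq⟩ := hderiv s hs1 y hyIoo
            have hf0 := (hbound s hs1 y hyIcc).1
            have hfh : f s y ≤ 1/2 :=
              hsmall s (le_trans hMN hsM) y hyIcc (by linarith [hy.2])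
            have hs0 : (0:ℝ) < s := by exact_mod_cast hs1
            rw [le_div_iff₀ hs0]
            calc (c/2) * (f s y / ∑ u ∈ Finset.Icc 1 s, f u y) * s
                = c * ((s:ℝ)/(∑ u ∈ Finset.Icc 1 s, f u y)) * f s y * (1/2) := by
                  ring
              _ ≤ c * ((s:ℝ)/(∑ u ∈ Finset.Icc 1 s, f u y)) * f s y * (1 - f s y) := by
                  apply mul_le_mul_of_nonneg_left (by linarith)
                  positivity
              _ ≤ deriv (f s) y := hineq
          have h3 : (c/2) * ∑ s ∈ Finset.Icc M k, (f s y / ∑ u ∈ Finset.Icc 1 s, f u y) ≤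
              ∑ s ∈ Finset.Icc M k, deriv (f s) y / (s:ℝ) := by
            rw [Finset.mul_sum]
            exact Finset.sum_le_sum h2
          have h4 := telescope M hM1 k hMk y hyIoo
          have h5 : Real.log (∑ s ∈ Finset.Icc 1 k, f s a) ≤
              Real.log (∑ s ∈ Finset.Icc 1 k, f s y) :=
            Real.log_le_log hSka0 (hSg_mono_x k a haIcc y hyIcc hy.1.le)
          have hSMy : 0 < ∑ s ∈ Finset.Icc 1 M, f s y := (hderiv M hM1 y hyIoo).1
          have h6 : Real.log (∑ s ∈ Finset.Icc 1 M, f s y) ≤ Real.log (M:ℝ) :=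
            Real.log_le_log hSMy (hSg_le M y hyIcc)
          calc (c/2) * (Real.log (∑ s ∈ Finset.Icc 1 k, f s a) - Real.log (M:ℝ))
              ≤ (c/2) * (Real.log (∑ s ∈ Finset.Icc 1 k, f s y)
                  - Real.log (∑ s ∈ Finset.Icc 1 M, f s y)) := by
                apply mul_le_mul_of_nonneg_left (by linarith) (by linarith)
            _ ≤ (c/2) * ∑ s ∈ Finset.Icc M k, (f s y / ∑ u ∈ Finset.Icc 1 s, f u y) := by
                apply mul_le_mul_of_nonneg_left h4 (by linarith)
            _ ≤ ∑ s ∈ Finset.Icc M k, deriv (f s) y / (s:ℝ) := h3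
            _ ≤ ∑ s ∈ Finset.Icc 1 k, deriv (f s) y / (s:ℝ) := h1
        have hmvt := aux_mvt_ge hax hGcont (fun y hy => hGd y
          (hsubIoo (Set.Ioo_subset_Icc_self hy))) hRbd
        have hGa : 0 ≤ G a := by
          apply Finset.sum_nonneg
          intro s hs
          have hs1 := (Finset.mem_Icc.mp hs).1
          have := (hbound s hs1 a haIcc).1
          positivity
        have hGx : G x ≤ Hn + f n x * (1 + Real.log k) := by
          have hkn : n ≤ k := le_trans hMn hMk
          have hIoc : ∀ m : ℕ, Finset.Icc 1 m = Finset.Ioc 0 m := by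
            intro m; rw [← Finset.Icc_add_one_left_eq_Ioc, zero_add]
          have hsplit : G x = ∑ s ∈ Finset.Icc 1 n, f s x / (s:ℝ)
              + ∑ s ∈ Finset.Ioc n k, f s x / (s:ℝ) := by
            rw [hGdef]
            simp only []
            rw [hIoc k, hIoc n]
            exact (Finset.sum_Ioc_consecutive _ (Nat.zero_le n) hkn).symm
          rw [hsplit]
          have hb1 : ∑ s ∈ Finset.Icc 1 n, f s x / (s:ℝ) ≤ Hn := by
            rw [hHdef]
            apply Finset.sum_le_sum
            intro s hs
            have hs1 := (Finset.mem_Icc.mp hs).1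
            have hs0 : (0:ℝ) < s := by exact_mod_cast hs1
            have := (hbound s hs1 x hxIcc).2
            apply div_le_div_of_nonneg_right this hs0.le
          have hb2 : ∑ s ∈ Finset.Ioc n k, f s x / (s:ℝ)
              ≤ f n x * ∑ s ∈ Finset.Ioc n k, (1:ℝ)/s := by
            rw [Finset.mul_sum]
            apply Finset.sum_le_sum
            intro s hs
            obtain ⟨hns, hsk⟩ := Finset.mem_Ioc.mp hs
            have hs1 : 1 ≤ s := le_trans hn hns.le
            have hfsx : f s x ≤ f n x := hfle n hn s hns.le x hxIcc
            have hs0 : (0:ℝ) < s := by exact_mod_cast hs1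
            calc f s x / (s:ℝ) ≤ f n x / (s:ℝ) :=
                  div_le_div_of_nonneg_right hfsx hs0.le
            _ = f n x * (1/(s:ℝ)) := by ring
          have hb3 : ∑ s ∈ Finset.Ioc n k, (1:ℝ)/s ≤ ∑ s ∈ Finset.Icc 1 k, (1:ℝ)/s := by
            apply Finset.sum_le_sum_of_subset_of_nonneg
            · rw [hIoc k]
              exact Finset.Ioc_subset_Ioc (Nat.zero_le n) (le_refl k)
            · intro i _ _
              positivity
          have hb4 : ∑ s ∈ Finset.Icc 1 k, (1:ℝ)/s ≤ 1 + Real.log k :=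
            aux_harmonic_le k h1k
          have hfnx0 : 0 ≤ f n x := (hbound n hn x hxIcc).1
          have hb5 : f n x * ∑ s ∈ Finset.Ioc n k, (1:ℝ)/s
              ≤ f n x * (1 + Real.log k) :=
            mul_le_mul_of_nonneg_left (le_trans hb3 hb4) hfnx0
          linarith
        have hSka' : ((k:ℝ))^((1:ℝ)-ε) ≤ ∑ s ∈ Finset.Icc 1 k, f s a :=
          le_trans hfreqk (hSg_mono_x k l' hl'Icc a haIcc hl'a.le)
        have h7 : (1-ε) * Real.log k ≤ Real.log (∑ s ∈ Finset.Icc 1 k, f s a) := by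
          have h8 := Real.log_le_log (Real.rpow_pos_of_pos hk0 _) hSka'
          rwa [Real.log_rpow hk0] at h8
        have h8 : (c/2) * ((1-ε)*Real.log k - Real.log (M:ℝ)) * (x - a)
            ≤ Hn + f n x * (1 + Real.log k) := by
          have hmono2 : (c/2) * ((1-ε)*Real.log k - Real.log (M:ℝ))
              ≤ (c/2) * (Real.log (∑ s ∈ Finset.Icc 1 k, f s a) - Real.log (M:ℝ)) := by
            apply mul_le_mul_of_nonneg_left (by linarith) (by linarith)
          have h9 : (c/2) * ((1-ε)*Real.log k - Real.log (M:ℝ)) * (x - a)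
              ≤ (c/2) * (Real.log (∑ s ∈ Finset.Icc 1 k, f s a) - Real.log (M:ℝ)) * (x - a) :=
            mul_le_mul_of_nonneg_right hmono2 (by linarith)
          linarith [hmvt, hGa, hGx]
        calc A * ((1-ε) * Real.log k - Real.log (M:ℝ))
            = (c/2) * ((1-ε)*Real.log k - Real.log (M:ℝ)) * (x - a) := by
              rw [hAdef]; ring
        _ ≤ Hn + f n x * (1 + Real.log k) := h8
      have hfreq := hl'freq ε hεpos
      have hevbig : ∀ᶠ (k:ℕ) in atTop,
          ((2/σ)*(Hn + A + A*Real.log (M:ℝ)) < Real.log k ∧ M ≤ k) := by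
        apply Filter.Eventually.and
        · have hlog := Real.tendsto_log_atTop.comp (tendsto_natCast_atTop_atTop (R := ℝ))
          exact hlog.eventually_gt_atTop _
        · exact eventually_ge_atTop M
      obtain ⟨k, hfk, hbig, hMk⟩ := (hfreq.and_eventually hevbig).exists
      have hmain := hMain k hMk hfk
      have h1k : 1 ≤ k := le_trans hM1 hMk
      have hLk : 0 ≤ Real.log k := Real.log_nonneg (by exact_mod_cast h1k)
      have e1 : A*((1-ε)*Real.log k - Real.log (M:ℝ))
          = A*Real.log k - (A*ε)*Real.log k - A*Real.log (M:ℝ) := by ring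
      rw [e1, hAε] at hmain
      have e2 : f n x * (1 + Real.log k) ≤ (A - σ)*(1 + Real.log k) :=
        mul_le_mul_of_nonneg_right (by linarith) (by linarith)
      have e2' : (A - σ)*(1 + Real.log k)
          = A + A*Real.log k - σ - σ*Real.log k := by ring
      have e3 : (σ/2) * ((2/σ)*(Hn + A + A*Real.log (M:ℝ)))
          = Hn + A + A*Real.log (M:ℝ) := by field_simp
      have e4 : (σ/2) * ((2/σ)*(Hn + A + A*Real.log (M:ℝ)))
          < (σ/2)*Real.log k :=
        mul_lt_mul_of_pos_left hbig (by linarith)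
      linarith [hmain, e2, e2', e3, e4]
    -- conclude part (ii)
    apply le_of_forall_pos_le_add
    intro δ hδ
    have hlt : sInf (insert lam₁ S) < min x (lam + (δ/2)/C) := by
      rw [← hlamdef]
      refine lt_min hlamx ?_
      have := div_pos (by linarith : (0:ℝ) < δ/2) hCpos
      linarith
    obtain ⟨u, huins, hu⟩ := exists_lt_of_csInf_lt (Set.insert_nonempty _ _) hlt
    rw [lt_min_iff] at hu
    have hux : u < x := hu.1
    have huS : u ∈ S := by
      rcases huins with rfl | h
      · linarith [hu.1, hxlam₁]
      · exact h
    have hulam : lam ≤ u := by rw [hlamdef]; exact csInf_le hbdd huins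
    have hukey := key u huS hux (δ/2) (by linarith)
    have h1 : u - lam ≤ (δ/2)/C := by linarith [hu.2]
    have h2 : C * (x - u) ≤ c/2 * (x - u) :=
      mul_le_mul_of_nonneg_right hC2 (by linarith)
    have h3 : C * (u - lam) ≤ C * ((δ/2)/C) := mul_le_mul_of_nonneg_left h1 hCpos.le
    have h4 : C * ((δ/2)/C) = δ/2 := by field_simp
    have h5 : C * (x - lam) = C*(x - u) + C*(u - lam) := by ring
    linarith
end
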